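/- Let F : ℝ^d → ℝ be differentiable with ‖∇F(x) − ∇F(y)‖ ≤ L‖x − y‖ for all x, y ∈ ℝ^d (L > 0), let X ⊆ ℝ^d be nonempty, closed and convex, set ρ = 4L and let 0 < η ≤ 2/(9L). Fix x ∈ X, and let g be a square-integrable random vector with E[g] = ∇F(x) and E‖g − ∇F(x)‖² ≤ σ². Set x⁺ := Π_X(x − η g) and x̂ := prox_{Φ/ρ}(x), where Φ := F + δ_X. Then E‖x⁺ − x̂‖² ≤ (1 − ηρ)‖x − x̂‖² + σ² η². -/

import Mathlib

open MeasureTheory InnerProductSpace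
open scoped RealInnerProductSpace

noncomputable section

/-- `q` is the Euclidean projection of `p` onto `X`. -/
def IsProjection {d : ℕ} (X : Set (EuclideanSpace ℝ (Fin d))) (p q : EuclideanSpace ℝ (Fin d)) : Prop :=
  q ∈ X ∧ ∀ y ∈ X, ‖q - p‖ ≤ ‖y - p‖

/-- `q = prox_{Φ/ρ}(p)`, i.e. `q` minimizes `y ↦ F y + ρ/2 ‖y - p‖²` over `X`. -/
def IsProx {d : ℕ} (X : Set (EuclideanSpace ℝ (Fin d))) (F : EuclideanSpace ℝ (Fin d) → ℝ) (ρ : ℝ) (p q : EuclideanSpace ℝ (Fin d)) : Prop :=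
  q ∈ X ∧ ∀ y ∈ X, F q + ρ / 2 * ‖q - p‖ ^ 2 ≤ F y + ρ / 2 * ‖y - p‖ ^ 2

section Helpers

variable {E : Type*} [NormedAddCommGroup E] [InnerProductSpace ℝ E]

lemma aux_nonpos {c B : ℝ} (hB : 0 ≤ B) (h : ∀ t : ℝ, 0 < t → t ≤ 1 → c ≤ t * B) : c ≤ 0 := by
  by_contra hc
  push_neg at hc
  rcases eq_or_lt_of_le hB with hB0 | hB0
  · have := h 1 one_pos le_rfl; nlinarith
  · have h1 := h (min 1 (c / (2 * B))) (lt_min one_pos (by positivity)) (min_le_left _ _)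
    have h2 : min 1 (c / (2 * B)) * B ≤ (c / (2 * B)) * B :=
      mul_le_mul_of_nonneg_right (min_le_right _ _) hB
    have h3 : c / (2 * B) * B = c / 2 := by field_simp
    linarith

lemma proj_inner_le {X : Set E} (hX : Convex ℝ X) {p q : E} (hqX : q ∈ X)
    (hmin : ∀ y ∈ X, ‖q - p‖ ≤ ‖y - p‖) {y : E} (hy : y ∈ X) :
    ⟪p - q, y - q⟫ ≤ 0 := by
  have key : ∀ t : ℝ, 0 < t → t ≤ 1 → 2 * ⟪p - q, y - q⟫ ≤ t * ‖y - q‖ ^ 2 := by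
    intro t ht0 ht1
    have hmem : q + t • (y - q) ∈ X := by
      have := hX hqX hy (by linarith : (0:ℝ) ≤ 1 - t) ht0.le (by ring)
      convert this using 1
      module
    have h1 : ‖q - p‖ ≤ ‖q + t • (y - q) - p‖ := hmin _ hmem
    have h2 : ‖q + t • (y - q) - p‖ ^ 2 = ‖q - p‖ ^ 2 + 2 * (t * ⟪q - p, y - q⟫) + t ^ 2 * ‖y - q‖ ^ 2 := by
      have : q + t • (y - q) - p = (q - p) + t • (y - q) := by abel
      rw [this, norm_add_sq_real, real_inner_smul_right, norm_smul]
      simp [Real.norm_eq_abs, abs_of_pos ht0]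
      ring
    have h3 : ‖q - p‖ ^ 2 ≤ ‖q + t • (y - q) - p‖ ^ 2 :=
      pow_le_pow_left₀ (norm_nonneg _) h1 2
    have h4 : ⟪q - p, y - q⟫ = - ⟪p - q, y - q⟫ := by
      rw [← inner_neg_left]; congr 1; abel
    rw [h2, h4] at h3
    nlinarith
  have h2c : 2 * ⟪p - q, y - q⟫ ≤ 0 := aux_nonpos (by positivity) key
  linarith

lemma proj_of_inner_le {X : Set E} {p q : E}
    (h : ∀ y ∈ X, ⟪p - q, y - q⟫ ≤ 0) : ∀ y ∈ X, ‖q - p‖ ≤ ‖y - p‖ := by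
  intro y hy
  have h2 : ‖y - p‖ ^ 2 = ‖q - p‖ ^ 2 + 2 * ⟪q - p, y - q⟫ + ‖y - q‖ ^ 2 := by
    have : y - p = (q - p) + (y - q) := by abel
    rw [this, norm_add_sq_real]
  have h4 : ⟪q - p, y - q⟫ = - ⟪p - q, y - q⟫ := by
    rw [← inner_neg_left]; congr 1; abel
  have h5 := h y hy
  have h6 : ‖q - p‖ ^ 2 ≤ ‖y - p‖ ^ 2 := by rw [h2, h4]; nlinarith [sq_nonneg ‖y - q‖]
  exact (pow_le_pow_iff_left₀ (norm_nonneg _) (norm_nonneg _) two_ne_zero).mp h6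

lemma proj_nonexpansive {X : Set E} (hX : Convex ℝ X) {p₁ q₁ p₂ q₂ : E}
    (h1 : q₁ ∈ X) (hmin1 : ∀ y ∈ X, ‖q₁ - p₁‖ ≤ ‖y - p₁‖)
    (h2 : q₂ ∈ X) (hmin2 : ∀ y ∈ X, ‖q₂ - p₂‖ ≤ ‖y - p₂‖) :
    ‖q₁ - q₂‖ ≤ ‖p₁ - p₂‖ := by
  have i1 := proj_inner_le hX h1 hmin1 h2
  have i2 := proj_inner_le hX h2 hmin2 h1
  set s := q₁ - q₂ with hs
  have i1' : 0 ≤ ⟪p₁ - q₁, s⟫ := by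
    have hq : q₂ - q₁ = -s := by rw [hs]; abel
    rw [hq, inner_neg_right] at i1; linarith
  have e : ⟪p₁ - p₂, s⟫ = ⟪p₁ - q₁, s⟫ - ⟪p₂ - q₂, s⟫ + ⟪q₁ - q₂, s⟫ := by
    simp only [inner_sub_left]; ring
  have key : ‖s‖ ^ 2 ≤ ⟪p₁ - p₂, s⟫ := by
    rw [e, ← hs, real_inner_self_eq_norm_sq]; linarith
  have hcs : ⟪p₁ - p₂, s⟫ ≤ ‖p₁ - p₂‖ * ‖s‖ := real_inner_le_norm _ _
  nlinarith [norm_nonneg s, norm_nonneg (p₁ - p₂)]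

variable [CompleteSpace E]

lemma quad_upper {F : E → ℝ} {F' : E → E} {L : ℝ} (hL : 0 ≤ L)
    (hgrad : ∀ y, HasGradientAt F (F' y) y)
    (hLip : ∀ u v : E, ‖F' u - F' v‖ ≤ L * ‖u - v‖) (u z : E) :
    F z ≤ F u + ⟪F' u, z - u⟫ + L * ‖z - u‖ ^ 2 := by
  set G : E → ℝ := fun w => F w - ⟪F' u, w⟫ with hG
  have hfd : ∀ w ∈ segment ℝ u z,
      HasFDerivWithinAt G (toDual ℝ E (F' w - F' u)) (segment ℝ u z) w := by
    intro w _
    have h1 : HasFDerivAt F (toDual ℝ E (F' w)) w := (hgrad w).hasFDerivAt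
    have h2 : HasFDerivAt (fun v : E => ⟪F' u, v⟫) (toDual ℝ E (F' u)) w := by
      have := (toDual ℝ E (F' u)).hasFDerivAt (x := w)
      exact this.congr_of_eventuallyEq
        (Filter.Eventually.of_forall fun v => (toDual_apply_apply).symm)
    have := h1.sub h2
    rw [← map_sub] at this
    exact this.hasFDerivWithinAt
  have bound : ∀ w ∈ segment ℝ u z, ‖toDual ℝ E (F' w - F' u)‖ ≤ L * ‖z - u‖ := by
    intro w hw
    rw [LinearIsometryEquiv.norm_map]
    refine le_trans (hLip w u) (mul_le_mul_of_nonneg_left ?_ hL)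
    rw [segment_eq_image'] at hw
    obtain ⟨t, ht, rfl⟩ := hw
    rw [add_sub_cancel_left, norm_smul, Real.norm_eq_abs, abs_of_nonneg ht.1]
    nlinarith [norm_nonneg (z - u), ht.2]
  have key := (convex_segment u z).norm_image_sub_le_of_norm_hasFDerivWithin_le
    hfd bound (left_mem_segment ℝ u z) (right_mem_segment ℝ u z)
  have hGzu : G z - G u = F z - F u - ⟪F' u, z - u⟫ := by
    simp only [hG, inner_sub_right]; ring
  have habs : F z - F u - ⟪F' u, z - u⟫ ≤ L * ‖z - u‖ * ‖z - u‖ := by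
    calc F z - F u - ⟪F' u, z - u⟫ = G z - G u := hGzu.symm
    _ ≤ ‖G z - G u‖ := le_abs_self _
    _ ≤ L * ‖z - u‖ * ‖z - u‖ := key
  nlinarith [habs]

lemma prox_vi {X : Set E} (hX : Convex ℝ X) {F : E → ℝ} {F' : E → E} {L ρ : ℝ}
    (hL : 0 ≤ L) (hρ : 0 ≤ ρ)
    (hgrad : ∀ y, HasGradientAt F (F' y) y)
    (hLip : ∀ u v : E, ‖F' u - F' v‖ ≤ L * ‖u - v‖)
    {x q : E} (hqX : q ∈ X)
    (hmin : ∀ y ∈ X, F q + ρ / 2 * ‖q - x‖ ^ 2 ≤ F y + ρ / 2 * ‖y - x‖ ^ 2)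
    {y : E} (hy : y ∈ X) :
    0 ≤ ⟪F' q + ρ • (q - x), y - q⟫ := by
  set c : ℝ := -(⟪F' q, y - q⟫ + ρ * ⟪q - x, y - q⟫) with hc
  have key : ∀ t : ℝ, 0 < t → t ≤ 1 → c ≤ t * ((L + ρ / 2) * ‖y - q‖ ^ 2) := by
    intro t ht0 ht1
    have hmem : q + t • (y - q) ∈ X := by
      have := hX hqX hy (by linarith : (0:ℝ) ≤ 1 - t) ht0.le (by ring)
      convert this using 1
      module
    have hprox := hmin _ hmem
    have hquad : F (q + t • (y - q)) ≤ F q + t * ⟪F' q, y - q⟫ + L * t ^ 2 * ‖y - q‖ ^ 2 := by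
      have := quad_upper hL hgrad hLip q (q + t • (y - q))
      rw [add_sub_cancel_left, real_inner_smul_right, norm_smul, Real.norm_eq_abs,
        abs_of_pos ht0] at this
      nlinarith [this]
    have hnorm : ‖q + t • (y - q) - x‖ ^ 2
        = ‖q - x‖ ^ 2 + 2 * (t * ⟪q - x, y - q⟫) + t ^ 2 * ‖y - q‖ ^ 2 := by
      have h : q + t • (y - q) - x = (q - x) + t • (y - q) := by abel
      rw [h, norm_add_sq_real, real_inner_smul_right, norm_smul, Real.norm_eq_abs,
        abs_of_pos ht0]
      ring
    rw [hnorm] at hprox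
    nlinarith [hprox, hquad, ht0, mul_pos ht0 ht0]
  have hB : (0:ℝ) ≤ (L + ρ / 2) * ‖y - q‖ ^ 2 := by positivity
  have := aux_nonpos hB key
  rw [inner_add_left, real_inner_smul_left]
  simp only [hc] at this
  linarith

end Helpers

set_option maxHeartbeats 1000000

/-- Lemma A.2 (Lemma 3.4 in Davis--Drusvyatskiy): one-step contraction of the projected SGD
step towards the proximal point, in the smooth setting. -/
theorem psgd_one_step_contraction {d : ℕ}
    {Ω : Type} [MeasurableSpace Ω] (μ : Measure Ω) [IsProbabilityMeasure μ]
    (X : Set (EuclideanSpace ℝ (Fin d))) (hXne : X.Nonempty) (hXcl : IsClosed X) (hXcvx : Convex ℝ X)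
    (F : EuclideanSpace ℝ (Fin d) → ℝ) (F' : EuclideanSpace ℝ (Fin d) → EuclideanSpace ℝ (Fin d)) (L ρ η σ : ℝ) (hL : 0 < L)
    (hgrad : ∀ y, HasGradientAt F (F' y) y)
    (hLip : ∀ u v : EuclideanSpace ℝ (Fin d), ‖F' u - F' v‖ ≤ L * ‖u - v‖)
    (hρ : ρ = 4 * L) (hη0 : 0 < η) (hη : η ≤ 2 / (9 * L))
    (x : EuclideanSpace ℝ (Fin d)) (hx : x ∈ X)
    (g : Ω → EuclideanSpace ℝ (Fin d)) (hg2 : MemLp g 2 μ)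
    (hmean : (∫ ω, g ω ∂μ) = F' x)
    (hvarg : (∫ ω, ‖g ω - F' x‖ ^ 2 ∂μ) ≤ σ ^ 2)
    (xplus : Ω → EuclideanSpace ℝ (Fin d)) (hxplus : ∀ ω, IsProjection X (x - η • g ω) (xplus ω))
    (xhat : EuclideanSpace ℝ (Fin d)) (hxhat : IsProx X F ρ x xhat) :
    (∫ ω, ‖xplus ω - xhat‖ ^ 2 ∂μ) ≤ (1 - η * ρ) * ‖x - xhat‖ ^ 2 + σ ^ 2 * η ^ 2 := by
  have hηL : η * L ≤ 2 / 9 := by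
    have h9 : (0:ℝ) < 9 * L := by positivity
    have := (le_div_iff₀ h9).mp hη
    nlinarith
  set ζ : Ω → EuclideanSpace ℝ (Fin d) := fun ω => g ω - F' x with hζ
  set w : EuclideanSpace ℝ (Fin d) := F' xhat + ρ • (xhat - x) with hw
  set u : EuclideanSpace ℝ (Fin d) :=
    (1 - η * ρ) • (x - xhat) - η • (F' x - F' xhat) with hu
  -- xhat is the projection of xhat - η • w onto X
  have hvi : ∀ y ∈ X, 0 ≤ ⟪w, y - xhat⟫ := fun y hy =>
    prox_vi hXcvx hL.le (by rw [hρ]; positivity) hgrad hLip hxhat.1 hxhat.2 hy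
  have hproj2 : ∀ y ∈ X, ‖xhat - (xhat - η • w)‖ ≤ ‖y - (xhat - η • w)‖ := by
    apply proj_of_inner_le
    intro y hy
    have : xhat - η • w - xhat = -(η • w) := by abel
    rw [this, inner_neg_left, inner_smul_left]
    have := hvi y hy
    simp only [RCLike.ofReal_real_eq_id, id_eq, conj_trivial]
    nlinarith [this, hη0]
  -- pointwise contraction
  have hptw : ∀ ω, ‖xplus ω - xhat‖ ≤ ‖u - η • ζ ω‖ := by
    intro ω
    have hne := proj_nonexpansive hXcvx (hxplus ω).1 (hxplus ω).2 hxhat.1 hproj2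
    have heq : (x - η • g ω) - (xhat - η • w) = u - η • ζ ω := by
      simp only [hu, hw, hζ]
      module
    rwa [heq] at hne
  -- integrability
  have hζ2 : MemLp ζ 2 μ := hg2.sub (memLp_const _)
  have hζint : Integrable ζ μ :=
    hζ2.integrable one_le_two
  have hζ0 : (∫ ω, ζ ω ∂μ) = 0 := by
    have hgint : Integrable g μ := hg2.integrable one_le_two
    simp only [hζ]
    rw [integral_sub hgint (integrable_const _), hmean, integral_const]
    simp
  have hUc : MemLp (fun ω => u - η • ζ ω) 2 μ := (memLp_const u).sub (hζ2.const_smul η)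
  have hUint : Integrable (fun ω => ‖u - η • ζ ω‖ ^ 2) μ := hUc.norm.integrable_sq
  have hζsq : Integrable (fun ω => ‖ζ ω‖ ^ 2) μ := hζ2.norm.integrable_sq
  have hmono : (∫ ω, ‖xplus ω - xhat‖ ^ 2 ∂μ) ≤ ∫ ω, ‖u - η • ζ ω‖ ^ 2 ∂μ := by
    apply integral_mono_of_nonneg (Filter.Eventually.of_forall fun ω => by positivity) hUint
    exact Filter.Eventually.of_forall fun ω =>
      pow_le_pow_left₀ (norm_nonneg _) (hptw ω) 2
  -- expansion of the square
  have hexp : (∫ ω, ‖u - η • ζ ω‖ ^ 2 ∂μ)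
      = ‖u‖ ^ 2 - 2 * (η * ⟪u, ∫ ω, ζ ω ∂μ⟫) + η ^ 2 * ∫ ω, ‖ζ ω‖ ^ 2 ∂μ := by
    have hptw2 : ∀ ω, ‖u - η • ζ ω‖ ^ 2
        = ‖u‖ ^ 2 - 2 * (η * ⟪u, ζ ω⟫) + η ^ 2 * ‖ζ ω‖ ^ 2 := by
      intro ω
      rw [norm_sub_sq_real, real_inner_smul_right, norm_smul, Real.norm_eq_abs,
        mul_pow, sq_abs]
    have I2 : Integrable (fun ω => 2 * (η * ⟪u, ζ ω⟫)) μ :=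
      ((hζint.const_inner u).const_mul η).const_mul 2
    have I3 : Integrable (fun ω => η ^ 2 * ‖ζ ω‖ ^ 2) μ := hζsq.const_mul _
    have I23 : Integrable (fun ω => ‖u‖ ^ 2 - 2 * (η * ⟪u, ζ ω⟫)) μ :=
      (integrable_const _).sub I2
    rw [integral_congr_ae (Filter.Eventually.of_forall hptw2),
      integral_add I23 I3,
      integral_sub (integrable_const _) I2, integral_const,
      integral_const_mul, integral_const_mul, integral_const_mul,
      integral_inner hζint u]
    simp
  rw [hζ0] at hexp
  simp only [inner_zero_right, mul_zero, sub_zero] at hexp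
  -- bound on ‖u‖
  have hub : ‖u‖ ≤ (1 - 3 * (η * L)) * ‖x - xhat‖ := by
    have h1 : ‖(1 - η * ρ) • (x - xhat)‖ = (1 - η * ρ) * ‖x - xhat‖ := by
      rw [norm_smul, Real.norm_eq_abs, abs_of_nonneg (by rw [hρ]; nlinarith)]
    have h2 : ‖η • (F' x - F' xhat)‖ ≤ η * (L * ‖x - xhat‖) := by
      rw [norm_smul, Real.norm_eq_abs, abs_of_pos hη0]
      exact mul_le_mul_of_nonneg_left (hLip x xhat) hη0.le
    have h3 : ‖u‖ ≤ ‖(1 - η * ρ) • (x - xhat)‖ + ‖η • (F' x - F' xhat)‖ := norm_sub_le _ _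
    rw [h1, hρ] at h3
    nlinarith [h3, h2]
  have husq : ‖u‖ ^ 2 ≤ ((1 - 3 * (η * L)) * ‖x - xhat‖) ^ 2 :=
    pow_le_pow_left₀ (norm_nonneg _) hub 2
  have hN : (∫ ω, ‖ζ ω‖ ^ 2 ∂μ) ≤ σ ^ 2 := hvarg
  have hsq : ((1 - 3 * (η * L)) * ‖x - xhat‖) ^ 2 ≤ (1 - η * ρ) * ‖x - xhat‖ ^ 2 := by
    rw [hρ, mul_pow]
    have hA : (0:ℝ) ≤ ‖x - xhat‖ ^ 2 := by positivity
    have ha : 0 < η * L := by positivity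
    have hfac : 0 ≤ (η * L) * (2 - 9 * (η * L)) * ‖x - xhat‖ ^ 2 :=
      mul_nonneg (mul_nonneg ha.le (by linarith)) hA
    nlinarith [hfac]
  calc (∫ ω, ‖xplus ω - xhat‖ ^ 2 ∂μ) ≤ ∫ ω, ‖u - η • ζ ω‖ ^ 2 ∂μ := hmono
    _ = ‖u‖ ^ 2 + η ^ 2 * ∫ ω, ‖ζ ω‖ ^ 2 ∂μ := hexp
    _ ≤ (1 - η * ρ) * ‖x - xhat‖ ^ 2 + σ ^ 2 * η ^ 2 := by
        nlinarith [husq, hsq, hN, sq_nonneg η]
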